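/- Let q̃ ∈ (0, 1/2) and p̃ = 1 − q̃. On a measurable space carrying an i.i.d. sequence (ũ_t)_{t≥1} of {0,1}-valued random variables, let P0 be the law under which P(ũ_t = 1) = q̃ and P1 the law under which P(ũ_t = 1) = p̃, and set S_t = Σ_{s≤t} (1{ũ_s = 1} − 1{ũ_s = 0}). For positive integers a, b define the stopping time T_{a,b} = inf{t ≥ 1 : S_t = −a or S_t = b}, the false alarm probability α(a,b) = P0(S_{T_{a,b}} = b), and the miss probability β(a,b) = P1(S_{T_{a,b}} = −a). Then for positive integers a, b, a′, b′, if α(a,b) = α(a′,b′) and β(a,b) = β(a′,b′), then a = a′ and b = b′; consequently the stopping times T_{a,b} and T_{a′,b′} coincide pointwise. -/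

import Mathlib

open MeasureTheory ProbabilityTheory Finset Filter
open scoped ENNReal Topology

set_option linter.unusedSectionVars false
set_option linter.unusedVariables false
set_option linter.deprecated false

namespace Stmt5Aux


/-- signed partial sum of a boolean word -/
def ssum (w : ℕ → Bool) (t : ℕ) : ℤ := ∑ s ∈ Finset.range t, (if w s then 1 else -1)

/-- first exit time of the walk driven by `w` from `(-a, b)` -/
noncomputable def texit (a b : ℕ) (w : ℕ → Bool) : ℕ :=
  sInf {t | 1 ≤ t ∧ (ssum w t = -(a : ℤ) ∨ ssum w t = (b : ℤ))}

/-- exit word of length `n` with exit value `v` -/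
def ExitW (a b : ℕ) (v : ℤ) (n : ℕ) (w : ℕ → Bool) : Prop :=
  1 ≤ n ∧ ssum w n = v ∧ ∀ t, 1 ≤ t → t < n → ssum w t ≠ -(a : ℤ) ∧ ssum w t ≠ (b : ℤ)

lemma ssum_zero (w : ℕ → Bool) : ssum w 0 = 0 := by simp [ssum]

lemma ssum_succ (w : ℕ → Bool) (t : ℕ) :
    ssum w (t + 1) = ssum w t + (if w t then 1 else -1) := by
  simp [ssum, Finset.sum_range_succ]

lemma ssum_congr {w w' : ℕ → Bool} {n : ℕ} (h : ∀ s < n, w s = w' s) {t : ℕ} (ht : t ≤ n) :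
    ssum w t = ssum w' t := by
  unfold ssum
  refine Finset.sum_congr rfl fun s hs => ?_
  rw [h s (lt_of_lt_of_le (Finset.mem_range.mp hs) ht)]

lemma ExitW_congr {a b : ℕ} {v : ℤ} {n : ℕ} {w w' : ℕ → Bool}
    (h : ∀ s < n, w s = w' s) (hw : ExitW a b v n w) : ExitW a b v n w' := by
  obtain ⟨h1, h2, h3⟩ := hw
  refine ⟨h1, by rw [← ssum_congr h le_rfl]; exact h2, fun t ht1 ht2 => ?_⟩
  rw [← ssum_congr h ht2.le]
  exact h3 t ht1 ht2

lemma ExitW.texit_eq {a b : ℕ} {v : ℤ} {n : ℕ} {w : ℕ → Bool}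
    (hv : v = -(a : ℤ) ∨ v = (b : ℤ)) (h : ExitW a b v n w) : texit a b w = n := by
  obtain ⟨h1, h2, h3⟩ := h
  have hmem : n ∈ {t | 1 ≤ t ∧ (ssum w t = -(a : ℤ) ∨ ssum w t = (b : ℤ))} := by
    refine ⟨h1, ?_⟩
    rcases hv with hv | hv
    · left; rw [h2, hv]
    · right; rw [h2, hv]
  refine le_antisymm (Nat.sInf_le hmem) (le_csInf ⟨n, hmem⟩ fun m hm => ?_)
  by_contra hlt
  push_neg at hlt
  rcases hm.2 with hc | hc
  · exact (h3 m hm.1 hlt).1 hc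
  · exact (h3 m hm.1 hlt).2 hc

lemma exit_iff {a b : ℕ} (ha : 0 < a) (hb : 0 < b) {v : ℤ}
    (hv : v = -(a : ℤ) ∨ v = (b : ℤ)) (w : ℕ → Bool) :
    ssum w (texit a b w) = v ↔ ∃ n, ExitW a b v n w := by
  have hv0 : v ≠ 0 := by
    rcases hv with hv | hv <;> subst hv <;> simp <;> omega
  constructor
  · intro h
    have hne : {t | 1 ≤ t ∧ (ssum w t = -(a : ℤ) ∨ ssum w t = (b : ℤ))}.Nonempty := by
      by_contra hemp
      rw [Set.not_nonempty_iff_eq_empty] at hemp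
      have : texit a b w = 0 := by
        unfold texit; rw [hemp]; exact Nat.sInf_empty
      rw [this, ssum_zero] at h
      exact hv0 h.symm
    have hmem := Nat.sInf_mem hne
    refine ⟨texit a b w, hmem.1, h, fun t ht1 ht2 => ?_⟩
    have hnot : t ∉ {t | 1 ≤ t ∧ (ssum w t = -(a : ℤ) ∨ ssum w t = (b : ℤ))} :=
      Nat.notMem_of_lt_sInf ht2
    constructor
    · intro hc; exact hnot ⟨ht1, Or.inl hc⟩
    · intro hc; exact hnot ⟨ht1, Or.inr hc⟩
  · rintro ⟨n, h⟩
    rw [h.texit_eq hv]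
    exact h.2.1

/-- discrete intermediate value: walk with unit steps starting at 0 hits any `v ≤ 0`
on its way below. -/
lemma int_ivt (f : ℕ → ℤ) (hstep : ∀ t, f (t + 1) = f t + 1 ∨ f (t + 1) = f t - 1)
    (h0 : f 0 = 0) {v : ℤ} (hv : v ≤ 0) :
    ∀ n, f n ≤ v → ∃ t, f t = v := by
  intro n
  induction n with
  | zero => intro h; exact ⟨0, le_antisymm h (h0 ▸ hv)⟩
  | succ n ih =>
    intro h
    by_cases hn : f n ≤ v
    · exact ih hn
    · push_neg at hn
      refine ⟨n + 1, le_antisymm h ?_⟩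
      rcases hstep n with hs | hs <;> omega

lemma ssum_not (w : ℕ → Bool) (t : ℕ) : ssum (fun s => !w s) t = -ssum w t := by
  unfold ssum
  rw [← Finset.sum_neg_distrib]
  refine Finset.sum_congr rfl fun s _ => ?_
  rcases Bool.dichotomy (w s) with h | h <;> simp [h]

lemma texit_not (a b : ℕ) (w : ℕ → Bool) : texit a b w = texit b a (fun s => !w s) := by
  unfold texit
  congr 1
  ext t
  simp only [Set.mem_setOf_eq, ssum_not]
  constructor
  · rintro ⟨h1, h2 | h2⟩
    · exact ⟨h1, Or.inr (by omega)⟩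
    · exact ⟨h1, Or.inl (by omega)⟩
  · rintro ⟨h1, h2 | h2⟩
    · exact ⟨h1, Or.inr (by omega)⟩
    · exact ⟨h1, Or.inl (by omega)⟩


-- index of finite words
abbrev WIdx : Type := Σ n : ℕ, Fin n → Bool

def exti (i : WIdx) : ℕ → Bool := fun s => if h : s < i.1 then i.2 ⟨s, h⟩ else false

variable {Ω : Type*} [MeasurableSpace Ω]

def cylSet (u : ℕ → Ω → Bool) (n : ℕ) (c : ℕ → Bool) : Set Ω :=
  ⋂ s ∈ Finset.range n, u s ⁻¹' {c s}

lemma mem_cylSet {u : ℕ → Ω → Bool} {n : ℕ} {c : ℕ → Bool} {ω : Ω} :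
    ω ∈ cylSet u n c ↔ ∀ s < n, u s ω = c s := by
  simp [cylSet]

lemma cylSet_measurable {u : ℕ → Ω → Bool} (hu : ∀ t, Measurable (u t)) (n : ℕ) (c : ℕ → Bool) :
    MeasurableSet (cylSet u n c) :=
  MeasurableSet.biInter (Set.to_countable _)
    fun s _ => (hu s) (measurableSet_singleton (c s))

/-- the exit event as a union of cylinders over exit words -/
def EvSet (u : ℕ → Ω → Bool) (a b : ℕ) (v : ℤ) : Set Ω :=
  {ω | ssum (fun s => u s ω) (texit a b (fun s => u s ω)) = v}

lemma EvSet_eq_iUnion (u : ℕ → Ω → Bool) {a b : ℕ} (ha : 0 < a) (hb : 0 < b) {v : ℤ}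
    (hv : v = -(a : ℤ) ∨ v = (b : ℤ)) :
    EvSet u a b v =
      ⋃ i : {i : WIdx // ExitW a b v i.1 (exti i)}, cylSet u i.1.1 (exti i.1) := by
  ext ω
  simp only [EvSet, Set.mem_setOf_eq, Set.mem_iUnion, exit_iff ha hb hv]
  constructor
  · rintro ⟨n, hn⟩
    refine ⟨⟨⟨n, fun s => u s ω⟩, ?_⟩, ?_⟩
    · refine ExitW_congr (w := fun s => u s ω) (fun s hs => ?_) hn
      simp [exti, hs]
    · rw [mem_cylSet]
      intro s hs
      simp [exti, hs]
  · rintro ⟨⟨i, hi⟩, hmem⟩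
    rw [mem_cylSet] at hmem
    exact ⟨i.1, ExitW_congr (w := exti i) (fun s hs => (hmem s hs).symm) hi⟩

lemma EvSet_disjoint (u : ℕ → Ω → Bool) {a b : ℕ} (ha : 0 < a) (hb : 0 < b) {v : ℤ}
    (hv : v = -(a : ℤ) ∨ v = (b : ℤ)) :
    Pairwise (Function.onFun Disjoint
      (fun i : {i : WIdx // ExitW a b v i.1 (exti i)} => cylSet u i.1.1 (exti i.1))) := by
  intro i j hij
  rw [Function.onFun, Set.disjoint_left]
  intro ω hiω hjω
  rw [mem_cylSet] at hiω hjω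
  have hwi : ExitW a b v i.1.1 (fun s => u s ω) :=
    ExitW_congr (fun s hs => (hiω s hs).symm) i.2
  have hwj : ExitW a b v j.1.1 (fun s => u s ω) :=
    ExitW_congr (fun s hs => (hjω s hs).symm) j.2
  have hnm : i.1.1 = j.1.1 := by
    rw [← hwi.texit_eq hv, ← hwj.texit_eq hv]
  apply hij
  rcases i with ⟨⟨n, ci⟩, hci⟩
  rcases j with ⟨⟨m, cj⟩, hcj⟩
  simp only at hnm
  subst hnm
  have : ci = cj := by
    funext s
    have h1 := hiω s s.2
    have h2 := hjω s s.2
    simp only [exti] at h1 h2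
    rw [dif_pos s.2] at h1 h2
    rw [← h1, ← h2]
  subst this
  rfl

lemma EvSet_measurable {u : ℕ → Ω → Bool} (hu : ∀ t, Measurable (u t)) {a b : ℕ}
    (ha : 0 < a) (hb : 0 < b) {v : ℤ} (hv : v = -(a : ℤ) ∨ v = (b : ℤ)) :
    MeasurableSet (EvSet u a b v) := by
  rw [EvSet_eq_iUnion u ha hb hv]
  exact MeasurableSet.iUnion fun i => cylSet_measurable hu _ _




lemma preim_true {u : ℕ → Ω → Bool} (t : ℕ) : u t ⁻¹' {true} = {ω | u t ω = true} := by
  ext ω; simp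

lemma marginal (μ : Measure Ω) [IsProbabilityMeasure μ] {u : ℕ → Ω → Bool}
    (hu : ∀ t, Measurable (u t)) {q : ℝ} (hq0 : 0 ≤ q) (hq1 : q ≤ 1)
    (hμ : ∀ t, μ {ω | u t ω = true} = ENNReal.ofReal q) (t : ℕ) (c : Bool) :
    μ (u t ⁻¹' {c}) = ENNReal.ofReal (if c then q else 1 - q) := by
  cases c
  · have hc : u t ⁻¹' {false} = (u t ⁻¹' {true})ᶜ := by
      ext ω; cases h : u t ω <;> simp [h]
    rw [hc, measure_compl ((hu t) (measurableSet_singleton true)) (measure_ne_top μ _),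
      preim_true, hμ t, measure_univ]
    rw [← ENNReal.ofReal_one, ← ENNReal.ofReal_sub _ hq0]
    norm_num
  · rw [preim_true, hμ t]
    norm_num

lemma cyl_meas (μ : Measure Ω) [IsProbabilityMeasure μ] {u : ℕ → Ω → Bool}
    (hu : ∀ t, Measurable (u t))
    (hind : iIndepFun u μ) {q : ℝ} (hq0 : 0 ≤ q) (hq1 : q ≤ 1)
    (hμ : ∀ t, μ {ω | u t ω = true} = ENNReal.ofReal q) (n : ℕ) (c : ℕ → Bool) :
    μ (cylSet u n c) = ∏ s ∈ Finset.range n, ENNReal.ofReal (if c s then q else 1 - q) := by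
  rw [cylSet, hind.measure_inter_preimage_eq_mul (Finset.range n)
    (sets := fun s => {c s}) (fun i _ => measurableSet_singleton (c i))]
  exact Finset.prod_congr rfl fun s _ => marginal μ hu hq0 hq1 hμ s (c s)




lemma count_split (w : ℕ → Bool) (n : ℕ) :
    ssum w n = 2 * (((Finset.range n).filter (fun s => w s = true)).card : ℤ) - n := by
  unfold ssum
  have hterm : ∀ s, (if w s then (1 : ℤ) else -1) = 2 * (if w s = true then (1 : ℤ) else 0) - 1 :=
    fun s => by cases h : w s <;> simp [h]
  rw [Finset.sum_congr rfl (fun s _ => hterm s), Finset.sum_sub_distrib, ← Finset.mul_sum,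
    Finset.sum_boole, Finset.sum_const, Finset.card_range]
  simp

lemma prod_split {M : Type*} [CommMonoid M] (P Q : M) (w : ℕ → Bool) (n : ℕ) :
    ∏ s ∈ Finset.range n, (if w s then P else Q)
      = P ^ ((Finset.range n).filter (fun s => w s = true)).card
        * Q ^ (n - ((Finset.range n).filter (fun s => w s = true)).card) := by
  rw [Finset.prod_ite]
  simp only [Finset.prod_const]
  congr 2
  rw [Finset.filter_not, Finset.card_sdiff_of_subset (Finset.filter_subset _ _), Finset.card_range]

lemma term_top {P Q : ℝ≥0∞} {w : ℕ → Bool} {n b : ℕ} (h : ssum w n = (b : ℤ)) :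
    Q ^ b * ∏ s ∈ Finset.range n, (if w s then P else Q)
      = P ^ b * ∏ s ∈ Finset.range n, (if w s then Q else P) := by
  set k := ((Finset.range n).filter (fun s => w s = true)).card with hk
  have hle : k ≤ n := by
    calc k ≤ (Finset.range n).card := Finset.card_filter_le _ _
    _ = n := Finset.card_range n
  have hcnt := count_split w n
  rw [h, ← hk] at hcnt
  have h2 : n - k + b = k := by omega
  rw [prod_split P Q w n, prod_split Q P w n, ← hk]
  calc Q ^ b * (P ^ k * Q ^ (n - k)) = P ^ k * Q ^ (n - k + b) := by ring
  _ = P ^ k * Q ^ k := by rw [h2]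
  _ = Q ^ k * P ^ (n - k + b) := by rw [h2]; ring
  _ = P ^ b * (Q ^ k * P ^ (n - k)) := by ring

lemma term_bot {P Q : ℝ≥0∞} {w : ℕ → Bool} {n a : ℕ} (h : ssum w n = -(a : ℤ)) :
    P ^ a * ∏ s ∈ Finset.range n, (if w s then P else Q)
      = Q ^ a * ∏ s ∈ Finset.range n, (if w s then Q else P) := by
  set k := ((Finset.range n).filter (fun s => w s = true)).card with hk
  have hle : k ≤ n := by
    calc k ≤ (Finset.range n).card := Finset.card_filter_le _ _
    _ = n := Finset.card_range n
  have hcnt := count_split w n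
  rw [h, ← hk] at hcnt
  have h2 : k + a = n - k := by omega
  rw [prod_split P Q w n, prod_split Q P w n, ← hk]
  calc P ^ a * (P ^ k * Q ^ (n - k)) = P ^ (k + a) * Q ^ (n - k) := by ring
  _ = P ^ (n - k) * Q ^ (n - k) := by rw [h2]
  _ = Q ^ (k + a) * P ^ (n - k) := by rw [h2]; ring
  _ = Q ^ a * (Q ^ k * P ^ (n - k)) := by ring





lemma map_bool_eq (μ : Measure Ω) [IsProbabilityMeasure μ] {f g : Ω → Bool}
    (hf : Measurable f) (hg : Measurable g)
    (h : μ {ω | f ω = true} = μ {ω | g ω = true}) :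
    Measure.map f μ = Measure.map g μ := by
  have htrue : ∀ f' : Ω → Bool, {ω | f' ω = true} = f' ⁻¹' {true} := by
    intro f'; ext ω; simp
  have hfalse : ∀ f' : Ω → Bool, (f' ⁻¹' {false}) = (f' ⁻¹' {true})ᶜ := by
    intro f'; ext ω; cases h' : f' ω <;> simp [h']
  have hpre : μ (f ⁻¹' {true}) = μ (g ⁻¹' {true}) := by
    rw [← htrue, ← htrue, h]
  refine Measure.ext fun s hs => ?_
  rw [Measure.map_apply hf hs, Measure.map_apply hg hs]
  by_cases ht : true ∈ s <;> by_cases hfa : false ∈ s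
  · have : s = Set.univ := by ext x; cases x <;> simp [ht, hfa]
    rw [this, Set.preimage_univ, Set.preimage_univ]
  · have : s = {true} := by ext x; cases x <;> simp [ht, hfa]
    rw [this, hpre]
  · have : s = {false} := by ext x; cases x <;> simp [ht, hfa]
    rw [this, hfalse, hfalse,
      measure_compl (hf (measurableSet_singleton true)) (measure_ne_top μ _),
      measure_compl (hg (measurableSet_singleton true)) (measure_ne_top μ _), hpre]
  · have : s = ∅ := by ext x; cases x <;> simp [ht, hfa]
    rw [this]; simp

/-- SLLN for the ±1 walk: the average tends a.e. to `2q - 1`. -/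
lemma slln_walk (μ : Measure Ω) [IsProbabilityMeasure μ] {u : ℕ → Ω → Bool}
    (hu : ∀ t, Measurable (u t))
    (hind : iIndepFun u μ) {q : ℝ} (hq0 : 0 ≤ q)
    (hμ : ∀ t, μ {ω | u t ω = true} = ENNReal.ofReal q) :
    ∀ᵐ ω ∂μ, Tendsto (fun n : ℕ => ((ssum (fun s => u s ω) n : ℤ) : ℝ) / n)
      atTop (𝓝 (2 * q - 1)) := by
  classical
  set f : Bool → ℝ := fun c => if c then 1 else -1 with hf
  have hfm : Measurable f := measurable_of_countable f
  set X : ℕ → Ω → ℝ := fun i ω => f (u i ω) with hX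
  have hXm : ∀ i, Measurable (X i) := fun i => hfm.comp (hu i)
  have hmeasset : ∀ i, MeasurableSet {ω | u i ω = true} := by
    intro i
    have : {ω | u i ω = true} = u i ⁻¹' {true} := by ext ω; simp
    rw [this]; exact (hu i) (measurableSet_singleton true)
  -- integrability
  have hint : Integrable (X 0) μ := by
    refine (integrable_const (1 : ℝ)).mono' (hXm 0).aestronglyMeasurable
      (Filter.Eventually.of_forall fun ω => ?_)
    simp only [hX, hf]
    cases u 0 ω <;> norm_num
  -- pairwise independence
  have hpind : Pairwise (Function.onFun (IndepFun · · μ) X) := by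
    intro i j hij
    exact (hind.comp (fun _ => f) (fun _ => hfm)).indepFun hij
  -- identical distribution
  have hident : ∀ i, IdentDistrib (X i) (X 0) μ μ := by
    intro i
    have hmap : Measure.map (u i) μ = Measure.map (u 0) μ :=
      map_bool_eq μ (hu i) (hu 0) (by rw [hμ i, hμ 0])
    have : IdentDistrib (u i) (u 0) μ μ :=
      ⟨(hu i).aemeasurable, (hu 0).aemeasurable, hmap⟩
    exact this.comp hfm
  -- integral
  have hXrw : X 0 = fun ω => 2 * ({ω' | u 0 ω' = true}.indicator (fun _ => (1 : ℝ)) ω) - 1 := by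
    funext ω
    by_cases h : u 0 ω = true
    · simp only [hX, hf, h, Set.indicator_apply, Set.mem_setOf_eq, if_true]
      norm_num
    · simp only [Bool.not_eq_true] at h
      simp only [hX, hf, h, Set.indicator_apply, Set.mem_setOf_eq]
      norm_num
  have hindint : Integrable ({ω' | u 0 ω' = true}.indicator (fun _ => (1 : ℝ))) μ :=
    (integrable_const (1 : ℝ)).indicator (hmeasset 0)
  have hmean : (∫ ω, X 0 ω ∂μ) = 2 * q - 1 := by
    rw [hXrw]
    rw [integral_sub ((hindint.const_mul 2)) (integrable_const 1)]
    rw [integral_const_mul, integral_const, probReal_univ]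
    have : (∫ ω, ({ω' | u 0 ω' = true}.indicator (fun _ => (1 : ℝ))) ω ∂μ)
        = (μ {ω' | u 0 ω' = true}).toReal := by
      rw [integral_indicator_const (1 : ℝ) (hmeasset 0)]
      simp [Measure.real]
    rw [this, hμ 0, ENNReal.toReal_ofReal hq0]
    simp
  have hslln := strong_law_ae_real X hint hpind hident
  rw [hmean] at hslln
  filter_upwards [hslln] with ω hω
  have : (fun n : ℕ => ((ssum (fun s => u s ω) n : ℤ) : ℝ) / n)
      = fun n : ℕ => (∑ i ∈ Finset.range n, X i ω) / n := by
    funext n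
    congr 1
    unfold ssum
    push_cast
    refine Finset.sum_congr rfl fun s _ => ?_
    cases h : u s ω <;> simp [hX, hf, h]
  rw [this]
  exact hω

lemma reach_low {w : ℕ → Bool} {c : ℝ}
    (hlim : Tendsto (fun n : ℕ => ((ssum w n : ℤ) : ℝ) / n) atTop (𝓝 c)) (hc : c < 0)
    (a : ℕ) : ∃ n, ssum w n ≤ -(a : ℤ) := by
  have hcc : c < c / 2 := by linarith
  obtain ⟨N, hN⟩ := (Filter.eventually_atTop).mp (hlim.eventually_lt_const hcc)
  obtain ⟨n0, hn0⟩ := exists_nat_ge ((a : ℝ) / (-(c / 2)))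
  set n := max N (max n0 1) with hn
  have hnN : N ≤ n := le_max_left _ _
  have hnn0 : n0 ≤ n := le_trans (le_max_left _ _) (le_max_right _ _)
  have hn1 : 1 ≤ n := le_trans (le_max_right _ _) (le_max_right _ _)
  have hnpos : (0 : ℝ) < n := by exact_mod_cast hn1
  have h1 : ((ssum w n : ℤ) : ℝ) / n < c / 2 := hN n hnN
  have h2 : ((ssum w n : ℤ) : ℝ) < c / 2 * n := by
    rwa [div_lt_iff₀ hnpos] at h1
  have hc2 : 0 < -(c / 2) := by linarith
  have h3 : (a : ℝ) ≤ n0 * (-(c / 2)) := by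
    rw [div_le_iff₀ hc2] at hn0
    exact hn0
  have h4 : c / 2 * n ≤ -(a : ℝ) := by
    have hcast : (n0 : ℝ) ≤ n := by exact_mod_cast hnn0
    nlinarith
  have h5 : ((ssum w n : ℤ) : ℝ) < ((-(a : ℤ) : ℤ) : ℝ) := by
    push_cast
    linarith
  exact ⟨n, (Int.cast_lt.mp h5).le⟩

lemma reach_high {w : ℕ → Bool} {c : ℝ}
    (hlim : Tendsto (fun n : ℕ => ((ssum w n : ℤ) : ℝ) / n) atTop (𝓝 c)) (hc : 0 < c)
    (b : ℕ) : ∃ n, (b : ℤ) ≤ ssum w n := by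
  have hlim' : Tendsto (fun n : ℕ => ((ssum (fun s => !w s) n : ℤ) : ℝ) / n) atTop (𝓝 (-c)) := by
    have : (fun n : ℕ => ((ssum (fun s => !w s) n : ℤ) : ℝ) / n)
        = fun n : ℕ => -(((ssum w n : ℤ) : ℝ) / n) := by
      funext n
      rw [ssum_not]
      push_cast
      ring
    rw [this]
    exact hlim.neg
  obtain ⟨n, hn⟩ := reach_low hlim' (by linarith) b
  rw [ssum_not] at hn
  exact ⟨n, by omega⟩

lemma exit_ae (μ : Measure Ω) [IsProbabilityMeasure μ] {u : ℕ → Ω → Bool}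
    (hu : ∀ t, Measurable (u t))
    (hind : iIndepFun u μ) {q : ℝ} (hq0 : 0 ≤ q) (hqne : q ≠ 1 / 2)
    (hμ : ∀ t, μ {ω | u t ω = true} = ENNReal.ofReal q) (a b : ℕ) (ha : 0 < a) (hb : 0 < b) :
    ∀ᵐ ω ∂μ, ssum (fun s => u s ω) (texit a b (fun s => u s ω)) = -(a : ℤ)
      ∨ ssum (fun s => u s ω) (texit a b (fun s => u s ω)) = (b : ℤ) := by
  filter_upwards [slln_walk μ hu hind hq0 hμ] with ω hω
  set w : ℕ → Bool := fun s => u s ω with hw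
  have hstep : ∀ t, ssum w (t + 1) = ssum w t + 1 ∨ ssum w (t + 1) = ssum w t - 1 := by
    intro t
    rw [ssum_succ]
    cases h : w t <;> simp [h] <;> ring
  have hex : ∃ t, 1 ≤ t ∧ (ssum w t = -(a : ℤ) ∨ ssum w t = (b : ℤ)) := by
    rcases lt_or_gt_of_ne (sub_ne_zero.mpr (by
        intro h; apply hqne; linarith) : 2 * q - 1 ≠ 0) with hc | hc
    · obtain ⟨n, hn⟩ := reach_low hω hc a
      obtain ⟨t, ht⟩ := int_ivt (ssum w) hstep (ssum_zero w) (by omega : -(a : ℤ) ≤ 0) n hn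
      have ht1 : 1 ≤ t := by
        rcases Nat.eq_zero_or_pos t with h | h
        · subst h; rw [ssum_zero] at ht; omega
        · exact h
      exact ⟨t, ht1, Or.inl ht⟩
    · obtain ⟨n, hn⟩ := reach_high hω hc b
      obtain ⟨t, ht⟩ := int_ivt (fun t => -ssum w t)
        (fun t => by rcases hstep t with h | h <;> simp only [h] <;> [right; left] <;> ring)
        (by show -ssum w 0 = 0; rw [ssum_zero]; ring) (by omega : -(b : ℤ) ≤ 0) n
        (by show -ssum w n ≤ -(b:ℤ); omega)
      have ht2 : -ssum w t = -(b : ℤ) := ht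
      have ht' : ssum w t = (b : ℤ) := by omega
      have ht1 : 1 ≤ t := by
        rcases Nat.eq_zero_or_pos t with h | h
        · subst h; rw [ssum_zero] at ht'; omega
        · exact h
      exact ⟨t, ht1, Or.inr ht'⟩
  have hmem := Nat.sInf_mem hex
  exact hmem.2


lemma cyl_meas' (μ : Measure Ω) [IsProbabilityMeasure μ] {u : ℕ → Ω → Bool}
    (hu : ∀ t, Measurable (u t))
    (hind : iIndepFun u μ) {q : ℝ} (hq0 : 0 ≤ q) (hq1 : q ≤ 1)
    (hμ : ∀ t, μ {ω | u t ω = true} = ENNReal.ofReal q) (n : ℕ) (c : ℕ → Bool) :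
    μ (cylSet u n c) = ∏ s ∈ Finset.range n,
      (if c s then ENNReal.ofReal q else ENNReal.ofReal (1 - q)) := by
  rw [cyl_meas μ hu hind hq0 hq1 hμ n c]
  exact Finset.prod_congr rfl fun s _ => apply_ite ENNReal.ofReal _ _ _

/-- key likelihood-ratio identity for the top exit event -/
lemma rel_top (μ ν : Measure Ω) [IsProbabilityMeasure μ] [IsProbabilityMeasure ν]
    {u : ℕ → Ω → Bool} (hu : ∀ t, Measurable (u t))
    (hindμ : iIndepFun u μ)
    (hindν : iIndepFun u ν)
    {q p : ℝ} (hq0 : 0 ≤ q) (hq1 : q ≤ 1) (hp : p = 1 - q)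
    (hμ : ∀ t, μ {ω | u t ω = true} = ENNReal.ofReal q)
    (hν : ∀ t, ν {ω | u t ω = true} = ENNReal.ofReal p)
    {a b : ℕ} (ha : 0 < a) (hb : 0 < b) :
    ENNReal.ofReal q ^ b * ν (EvSet u a b (b : ℤ))
      = ENNReal.ofReal p ^ b * μ (EvSet u a b (b : ℤ)) := by
  have hp0 : 0 ≤ p := by rw [hp]; linarith
  have hp1 : p ≤ 1 := by rw [hp]; linarith
  have h1p : 1 - p = q := by rw [hp]; ring
  rw [EvSet_eq_iUnion u ha hb (Or.inr rfl),
    measure_iUnion (EvSet_disjoint u ha hb (Or.inr rfl)) (fun i => cylSet_measurable hu _ _),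
    measure_iUnion (EvSet_disjoint u ha hb (Or.inr rfl)) (fun i => cylSet_measurable hu _ _),
    ← ENNReal.tsum_mul_left, ← ENNReal.tsum_mul_left]
  refine tsum_congr fun i => ?_
  rw [cyl_meas' μ hu hindμ hq0 hq1 hμ, cyl_meas' ν hu hindν hp0 hp1 hν, h1p, ← hp]
  exact term_top i.2.2.1

lemma not_measurable {u : ℕ → Ω → Bool} (hu : ∀ t, Measurable (u t)) (t : ℕ) :
    Measurable (fun ω => !(u t ω)) :=
  (measurable_of_countable (fun c : Bool => !c)).comp (hu t)

lemma not_indep {u : ℕ → Ω → Bool} {μ : Measure Ω}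
    (hind : iIndepFun u μ) :
    iIndepFun (fun t ω => !(u t ω)) μ :=
  hind.comp (fun _ c => !c) (fun _ => measurable_of_countable _)

lemma not_marginal (μ : Measure Ω) [IsProbabilityMeasure μ] {u : ℕ → Ω → Bool}
    (hu : ∀ t, Measurable (u t)) {q : ℝ} (hq0 : 0 ≤ q) (hq1 : q ≤ 1)
    (hμ : ∀ t, μ {ω | u t ω = true} = ENNReal.ofReal q) (t : ℕ) :
    μ {ω | (!(u t ω)) = true} = ENNReal.ofReal (1 - q) := by
  have hs : {ω | (!(u t ω)) = true} = {ω | u t ω = true}ᶜ := by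
    ext ω; cases h : u t ω <;> simp [h]
  have hms : MeasurableSet {ω | u t ω = true} := by
    have : {ω | u t ω = true} = u t ⁻¹' {true} := by ext ω; simp
    rw [this]; exact (hu t) (measurableSet_singleton true)
  rw [hs, measure_compl hms (measure_ne_top μ _), measure_univ, hμ t,
    ← ENNReal.ofReal_one, ← ENNReal.ofReal_sub _ hq0]

lemma EvSet_neg (u : ℕ → Ω → Bool) (a b : ℕ) :
    EvSet u a b (-(a : ℤ)) = EvSet (fun t ω => !(u t ω)) b a ((a : ℕ) : ℤ) := by
  ext ω
  simp only [EvSet, Set.mem_setOf_eq]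
  rw [← texit_not a b (fun s => u s ω), ssum_not (fun s => u s ω)]
  omega

lemma ssum_all_true {w : ℕ → Bool} {n t : ℕ} (h : ∀ s < n, w s = true) (ht : t ≤ n) :
    ssum w t = (t : ℤ) := by
  unfold ssum
  rw [Finset.sum_congr rfl (fun s hs => by
    rw [if_pos (h s (lt_of_lt_of_le (Finset.mem_range.mp hs) ht))])]
  simp

lemma lb_top (μ : Measure Ω) [IsProbabilityMeasure μ] {u : ℕ → Ω → Bool}
    (hu : ∀ t, Measurable (u t))
    (hind : iIndepFun u μ)
    {q : ℝ} (hq0 : 0 ≤ q) (hq1 : q ≤ 1)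
    (hμ : ∀ t, μ {ω | u t ω = true} = ENNReal.ofReal q)
    {a b : ℕ} (ha : 0 < a) (hb : 0 < b) :
    ENNReal.ofReal q ^ b ≤ μ (EvSet u a b (b : ℤ)) := by
  have hsub : cylSet u b (fun _ => true) ⊆ EvSet u a b (b : ℤ) := by
    intro ω hω
    rw [mem_cylSet] at hω
    have hall : ∀ s < b, (fun s => u s ω) s = true := hω
    show ssum (fun s => u s ω) (texit a b (fun s => u s ω)) = (b : ℤ)
    rw [exit_iff ha hb (Or.inr rfl)]
    refine ⟨b, hb, ssum_all_true hall le_rfl, fun t ht1 ht2 => ?_⟩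
    rw [ssum_all_true hall ht2.le]
    omega
  calc ENNReal.ofReal q ^ b = μ (cylSet u b (fun _ => true)) := by
        rw [cyl_meas' μ hu hind hq0 hq1 hμ]
        simp
  _ ≤ _ := measure_mono hsub

lemma pow_balance {x y : ℝ} (hx : 0 < x) (hxy : x < y) {m m' : ℕ}
    (h : x ^ m * y ^ m' = y ^ m * x ^ m') : m = m' := by
  have key : ∀ m m' : ℕ, m < m' → x ^ m * y ^ m' = y ^ m * x ^ m' → False := by
    intro m m' hlt heq
    have hd : m' = m + (m' - m) := by omega
    have hd0 : m' - m ≠ 0 := by omega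
    rw [hd, pow_add, pow_add] at heq
    have hxm : 0 < x ^ m * y ^ m := mul_pos (pow_pos hx m) (pow_pos (hx.trans hxy) m)
    have hcancel : y ^ (m' - m) = x ^ (m' - m) := by
      have h2 : (x ^ m * y ^ m) * y ^ (m' - m) = (x ^ m * y ^ m) * x ^ (m' - m) := by
        linear_combination heq
      exact mul_left_cancel₀ (ne_of_gt hxm) h2
    have : x ^ (m' - m) < y ^ (m' - m) := pow_lt_pow_left₀ hxy hx.le hd0
    linarith
  rcases lt_trichotomy m m' with hlt | he | hgt
  · exact absurd h (fun hh => key m m' hlt hh)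
  · exact he
  · exact absurd h (fun hh => key m' m hgt (by linarith))


lemma exit_sum (μ : Measure Ω) [IsProbabilityMeasure μ] {u : ℕ → Ω → Bool}
    (hu : ∀ t, Measurable (u t))
    (hind : iIndepFun u μ)
    {q : ℝ} (hq0 : 0 ≤ q) (hqne : q ≠ 1 / 2)
    (hμ : ∀ t, μ {ω | u t ω = true} = ENNReal.ofReal q)
    {a b : ℕ} (ha : 0 < a) (hb : 0 < b) :
    μ (EvSet u a b (-(a : ℤ))) + μ (EvSet u a b (b : ℤ)) = 1 := by
  have hae := exit_ae μ hu hind hq0 hqne hμ a b ha hb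
  have hdisj : Disjoint (EvSet u a b (-(a : ℤ))) (EvSet u a b (b : ℤ)) := by
    rw [Set.disjoint_left]
    intro ω h1 h2
    simp only [EvSet, Set.mem_setOf_eq] at h1 h2
    omega
  have hmb : MeasurableSet (EvSet u a b (-(a : ℤ))) :=
    EvSet_measurable hu ha hb (Or.inl rfl)
  have hmt : MeasurableSet (EvSet u a b (b : ℤ)) :=
    EvSet_measurable hu ha hb (Or.inr rfl)
  rw [← measure_union hdisj hmt, ← prob_compl_eq_zero_iff (hmb.union hmt)]
  rw [ae_iff] at hae
  convert hae using 2
  rfl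

end Stmt5Aux

open MeasureTheory ProbabilityTheory
open scoped ENNReal

/-- Theorem 1 of the paper (symmetric stochastic encryption is ineffective):
under encrypted-bit probabilities `q̃ < 1/2` under `P0` and `p̃ = 1 - q̃` under `P1`,
both the LFC's SPRT and the EFC's mismatched SPRT are exit times of the same ±1 random
walk from integer intervals; equality of false alarm and miss probabilities forces the
thresholds, and hence the stopping times, to coincide. -/
theorem stmt_5 {Ω : Type*} [MeasurableSpace Ω]
    (μ0 μ1 : Measure Ω) [IsProbabilityMeasure μ0] [IsProbabilityMeasure μ1]
    (qt pt : ℝ) (hq0 : 0 < qt) (hq1 : qt < 1 / 2) (hpt : pt = 1 - qt)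
    (u : ℕ → Ω → Bool) (humeas : ∀ t, Measurable (u t))
    (hindep0 : iIndepFun u μ0)
    (hindep1 : iIndepFun u μ1)
    (h0 : ∀ t, μ0 {ω | u t ω = true} = ENNReal.ofReal qt)
    (h1 : ∀ t, μ1 {ω | u t ω = true} = ENNReal.ofReal pt)
    (S : ℕ → Ω → ℤ)
    (hS : ∀ t ω, S t ω = ∑ s ∈ Finset.range t, (if u s ω then (1 : ℤ) else -1))
    (T : ℕ → ℕ → Ω → ℕ)
    (hT : ∀ a b ω, T a b ω = sInf {t | 1 ≤ t ∧ (S t ω = -(a : ℤ) ∨ S t ω = (b : ℤ))})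
    (α β : ℕ → ℕ → ℝ≥0∞)
    (hα : ∀ a b, α a b = μ0 {ω | S (T a b ω) ω = (b : ℤ)})
    (hβ : ∀ a b, β a b = μ1 {ω | S (T a b ω) ω = -(a : ℤ)})
    (a b a' b' : ℕ) (ha : 0 < a) (hb : 0 < b) (ha' : 0 < a') (hb' : 0 < b')
    (hαeq : α a b = α a' b') (hβeq : β a b = β a' b') :
    a = a' ∧ b = b' ∧ ∀ ω, T a b ω = T a' b' ω := by
  classical
  open Stmt5Aux in
  have hpt0 : 0 < pt := by rw [hpt]; linarith
  have hpt1 : pt ≤ 1 := by rw [hpt]; linarith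
  have hqt1 : qt ≤ 1 := by linarith
  have hqp : qt < pt := by rw [hpt]; linarith
  have hqne0 : qt ≠ 1 / 2 := ne_of_lt hq1
  have hqne1 : pt ≠ 1 / 2 := by rw [hpt]; intro h; apply hqne0; linarith
  -- translation of S and T
  have hSw : ∀ t ω, S t ω = Stmt5Aux.ssum (fun s => u s ω) t := fun t ω => hS t ω
  have hTw : ∀ c d ω, T c d ω = Stmt5Aux.texit c d (fun s => u s ω) := by
    intro c d ω
    rw [hT]
    unfold Stmt5Aux.texit
    congr 1
    ext t
    simp only [Set.mem_setOf_eq, hSw]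
  have hEtop : ∀ c d : ℕ, {ω | S (T c d ω) ω = (d : ℤ)} = Stmt5Aux.EvSet u c d (d : ℤ) := by
    intro c d; ext ω
    simp only [Set.mem_setOf_eq, Stmt5Aux.EvSet, hSw, hTw]
  have hEbot : ∀ c d : ℕ, {ω | S (T c d ω) ω = -(c : ℤ)}
      = Stmt5Aux.EvSet u c d (-(c : ℤ)) := by
    intro c d; ext ω
    simp only [Set.mem_setOf_eq, Stmt5Aux.EvSet, hSw, hTw]
  -- data for the negated process
  have hun : ∀ t, Measurable (fun ω => !(u t ω)) := Stmt5Aux.not_measurable humeas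
  have hind0n : iIndepFun (fun t ω => !(u t ω)) μ0 :=
    Stmt5Aux.not_indep hindep0
  have hind1n : iIndepFun (fun t ω => !(u t ω)) μ1 :=
    Stmt5Aux.not_indep hindep1
  have h1pt : (1 : ℝ) - pt = qt := by rw [hpt]; ring
  have h1qt : (1 : ℝ) - qt = pt := by rw [hpt]
  have h0n : ∀ t, μ0 {ω | (!(u t ω)) = true} = ENNReal.ofReal pt := by
    intro t; rw [Stmt5Aux.not_marginal μ0 humeas hq0.le hqt1 h0 t, h1qt]
  have h1n : ∀ t, μ1 {ω | (!(u t ω)) = true} = ENNReal.ofReal qt := by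
    intro t; rw [Stmt5Aux.not_marginal μ1 humeas hpt0.le hpt1 h1 t, h1pt]
  -- real-valued measures of exit events
  set A0 : ℝ := (μ0 (Stmt5Aux.EvSet u a b (b : ℤ))).toReal with hA0def
  set B0 : ℝ := (μ0 (Stmt5Aux.EvSet u a b (-(a : ℤ)))).toReal with hB0def
  set A1 : ℝ := (μ1 (Stmt5Aux.EvSet u a b (b : ℤ))).toReal with hA1def
  set B1 : ℝ := (μ1 (Stmt5Aux.EvSet u a b (-(a : ℤ)))).toReal with hB1def
  set A0' : ℝ := (μ0 (Stmt5Aux.EvSet u a' b' (b' : ℤ))).toReal with hA0'def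
  set B0' : ℝ := (μ0 (Stmt5Aux.EvSet u a' b' (-(a' : ℤ)))).toReal with hB0'def
  set A1' : ℝ := (μ1 (Stmt5Aux.EvSet u a' b' (b' : ℤ))).toReal with hA1'def
  set B1' : ℝ := (μ1 (Stmt5Aux.EvSet u a' b' (-(a' : ℤ)))).toReal with hB1'def
  -- a.s. exit: sums to one
  have hsum0 : B0 + A0 = 1 := by
    have := Stmt5Aux.exit_sum μ0 humeas hindep0 hq0.le hqne0 h0 ha hb
    have h' := congrArg ENNReal.toReal this
    rwa [ENNReal.toReal_add (measure_ne_top μ0 _) (measure_ne_top μ0 _),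
      ENNReal.toReal_one] at h'
  have hsum1 : B1 + A1 = 1 := by
    have := Stmt5Aux.exit_sum μ1 humeas hindep1 hpt0.le hqne1 h1 ha hb
    have h' := congrArg ENNReal.toReal this
    rwa [ENNReal.toReal_add (measure_ne_top μ1 _) (measure_ne_top μ1 _),
      ENNReal.toReal_one] at h'
  have hsum0' : B0' + A0' = 1 := by
    have := Stmt5Aux.exit_sum μ0 humeas hindep0 hq0.le hqne0 h0 ha' hb'
    have h' := congrArg ENNReal.toReal this
    rwa [ENNReal.toReal_add (measure_ne_top μ0 _) (measure_ne_top μ0 _),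
      ENNReal.toReal_one] at h'
  have hsum1' : B1' + A1' = 1 := by
    have := Stmt5Aux.exit_sum μ1 humeas hindep1 hpt0.le hqne1 h1 ha' hb'
    have h' := congrArg ENNReal.toReal this
    rwa [ENNReal.toReal_add (measure_ne_top μ1 _) (measure_ne_top μ1 _),
      ENNReal.toReal_one] at h'
  -- likelihood-ratio identities
  have toRealize : ∀ (x : ℝ) (hx : 0 ≤ x) (y : ℝ) (hy : 0 ≤ y) (m : ℕ) (ξ η : ℝ≥0∞),
      ENNReal.ofReal x ^ m * ξ = ENNReal.ofReal y ^ m * η → ξ ≠ ⊤ → η ≠ ⊤ →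
      x ^ m * ξ.toReal = y ^ m * η.toReal := by
    intro x hx y hy m ξ η h hξ hη
    have h' := congrArg ENNReal.toReal h
    rwa [ENNReal.toReal_mul, ENNReal.toReal_mul, ENNReal.toReal_pow, ENNReal.toReal_pow,
      ENNReal.toReal_ofReal hx, ENNReal.toReal_ofReal hy] at h'
  have e1 : qt ^ b * A1 = pt ^ b * A0 :=
    toRealize qt hq0.le pt hpt0.le b _ _
      (Stmt5Aux.rel_top μ0 μ1 humeas hindep0 hindep1 hq0.le hqt1 hpt h0 h1 ha hb)
      (measure_ne_top μ1 _) (measure_ne_top μ0 _)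
  have e1' : qt ^ b' * A1' = pt ^ b' * A0' :=
    toRealize qt hq0.le pt hpt0.le b' _ _
      (Stmt5Aux.rel_top μ0 μ1 humeas hindep0 hindep1 hq0.le hqt1 hpt h0 h1 ha' hb')
      (measure_ne_top μ1 _) (measure_ne_top μ0 _)
  have e2 : qt ^ a * B0 = pt ^ a * B1 := by
    have hrel := Stmt5Aux.rel_top μ1 μ0 hun hind1n hind0n hq0.le hqt1 hpt h1n h0n hb ha
    rw [← Stmt5Aux.EvSet_neg u a b] at hrel
    exact toRealize qt hq0.le pt hpt0.le a _ _ hrel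
      (measure_ne_top μ0 _) (measure_ne_top μ1 _)
  have e2' : qt ^ a' * B0' = pt ^ a' * B1' := by
    have hrel := Stmt5Aux.rel_top μ1 μ0 hun hind1n hind0n hq0.le hqt1 hpt h1n h0n hb' ha'
    rw [← Stmt5Aux.EvSet_neg u a' b'] at hrel
    exact toRealize qt hq0.le pt hpt0.le a' _ _ hrel
      (measure_ne_top μ0 _) (measure_ne_top μ1 _)
  -- positivity
  have hA0pos : 0 < A0 := by
    have hle := Stmt5Aux.lb_top μ0 humeas hindep0 hq0.le hqt1 h0 ha hb
    have := ENNReal.toReal_mono (measure_ne_top μ0 _) hle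
    rw [ENNReal.toReal_pow, ENNReal.toReal_ofReal hq0.le] at this
    calc (0:ℝ) < qt ^ b := pow_pos hq0 b
    _ ≤ A0 := this
  have hB0pos : 0 < B0 := by
    have hle := Stmt5Aux.lb_top μ0 hun hind0n hpt0.le hpt1 h0n hb ha
    rw [← Stmt5Aux.EvSet_neg u a b] at hle
    have := ENNReal.toReal_mono (measure_ne_top μ0 _) hle
    rw [ENNReal.toReal_pow, ENNReal.toReal_ofReal hpt0.le] at this
    calc (0:ℝ) < pt ^ a := pow_pos hpt0 a
    _ ≤ B0 := this
  have hA1pos : 0 < A1 := by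
    nlinarith [pow_pos hq0 b, pow_pos hpt0 b, mul_pos (pow_pos hpt0 b) hA0pos]
  have hB1pos : 0 < B1 := by
    nlinarith [pow_pos hq0 a, pow_pos hpt0 a, mul_pos (pow_pos hq0 a) hB0pos]
  -- transfer the equal error probabilities
  have hAeq : A0' = A0 := by
    have := hαeq
    rw [hα a b, hα a' b', hEtop a b, hEtop a' b'] at this
    rw [hA0'def, hA0def, this]
  have hBeq : B1' = B1 := by
    have := hβeq
    rw [hβ a b, hβ a' b', hEbot a b, hEbot a' b'] at this
    rw [hB1'def, hB1def, this]
  have hA1eq : A1' = A1 := by linarith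
  have hB0eq : B0' = B0 := by linarith
  rw [hAeq, hA1eq] at e1'
  rw [hBeq, hB0eq] at e2'
  -- cancel to get the pure power identities
  have keyb : qt ^ b * pt ^ b' = pt ^ b * qt ^ b' := by
    have h2 : (qt ^ b * pt ^ b') * (A1 * A0) = (pt ^ b * qt ^ b') * (A1 * A0) := by
      calc (qt ^ b * pt ^ b') * (A1 * A0) = (qt ^ b * A1) * (pt ^ b' * A0) := by ring
      _ = (pt ^ b * A0) * (qt ^ b' * A1) := by rw [e1, ← e1']
      _ = (pt ^ b * qt ^ b') * (A1 * A0) := by ring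
    exact mul_right_cancel₀ (ne_of_gt (mul_pos hA1pos hA0pos)) h2
  have keya : qt ^ a * pt ^ a' = pt ^ a * qt ^ a' := by
    have h2 : (qt ^ a * pt ^ a') * (B0 * B1) = (pt ^ a * qt ^ a') * (B0 * B1) := by
      calc (qt ^ a * pt ^ a') * (B0 * B1) = (qt ^ a * B0) * (pt ^ a' * B1) := by ring
      _ = (pt ^ a * B1) * (qt ^ a' * B0) := by rw [e2, ← e2']
      _ = (pt ^ a * qt ^ a') * (B0 * B1) := by ring
    exact mul_right_cancel₀ (ne_of_gt (mul_pos hB0pos hB1pos)) h2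
  have hbb : b = b' := Stmt5Aux.pow_balance hq0 hqp keyb
  have haa : a = a' := Stmt5Aux.pow_balance hq0 hqp keya
  exact ⟨haa, hbb, fun ω => by rw [haa, hbb]⟩
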